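/- The ring homomorphism ℂ[u,v,s]/(uᵏv − (s^d−1)^{m'}) → ℂ[u,w,s]/(uᵐw − (s^d−1)) determined by u ↦ u, s ↦ s, v ↦ w^{m'} is well-defined and injective, where k = m·m'. -/

import Mathlib

open MvPolynomial

noncomputable section Stmt9Aux

abbrev S9 := MvPolynomial (Fin 2) ℂ
abbrev F9 := FractionRing S9

def φ9 : S9 →+* F9 := algebraMap S9 F9

lemma φ9_inj : Function.Injective φ9 := IsFractionRing.injective S9 F9

def uu : F9 := φ9 (X 0)
def ss : F9 := φ9 (X 1)
def ff (d : ℕ) : S9 := (X 1 : S9) ^ d - 1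

lemma uu_ne : uu ≠ 0 := by
  intro h
  have : (X 0 : S9) = 0 := φ9_inj (by simpa [uu] using h)
  exact MvPolynomial.X_ne_zero _ this

lemma ff_ne {d : ℕ} (hd : 1 ≤ d) : ff d ≠ 0 := by
  intro h
  have := congrArg (MvPolynomial.eval (fun _ => (0:ℂ))) h
  simp [ff, zero_pow (by omega : d ≠ 0)] at this

lemma X0_not_dvd_ff {d : ℕ} (hd : 1 ≤ d) : ¬ ((X 0 : S9) ∣ ff d) := by
  rintro ⟨c, hc⟩
  have := congrArg (MvPolynomial.eval (fun _ => (0:ℂ))) hc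
  simp [ff, zero_pow (by omega : d ≠ 0)] at this

lemma prime_X0 : Prime (X 0 : S9) := by
  rw [← MulEquiv.prime_iff (finSuccEquiv ℂ 1).toMulEquiv]
  have : (finSuccEquiv ℂ 1).toMulEquiv (X 0 : S9) = Polynomial.X := by
    simpa using finSuccEquiv_X_zero (R := ℂ) (n := 1)
  rw [this]
  exact Polynomial.prime_X

/-- the generator of the ideal downstairs, as a polynomial in `v` over `S9` -/
def gen9 (i j d : ℕ) : Polynomial S9 :=
  Polynomial.C ((X 0 : S9) ^ i) * Polynomial.X - Polynomial.C ((ff d) ^ j)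

lemma prime_CX0 : Prime (Polynomial.C (X 0 : S9)) :=
  Polynomial.prime_C_iff.mpr prime_X0

lemma CX0_not_dvd_gen {i j d : ℕ} (hi : 1 ≤ i) (hj : 1 ≤ j) (hd : 1 ≤ d) :
    ¬ (Polynomial.C (X 0 : S9) ∣ gen9 i j d) := by
  intro h
  have h0 := (Polynomial.C_dvd_iff_dvd_coeff _ _).mp h 0
  have hc : (gen9 i j d).coeff 0 = -((ff d) ^ j) := by
    rw [gen9, Polynomial.coeff_sub, Polynomial.coeff_C_mul,
      Polynomial.coeff_X_zero, Polynomial.coeff_C_zero, mul_zero, zero_sub]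
  rw [hc, dvd_neg] at h0
  exact X0_not_dvd_ff hd (prime_X0.dvd_of_dvd_pow (n := j) h0)

lemma regular9 {i j d : ℕ} (hi : 1 ≤ i) (hj : 1 ≤ j) (hd : 1 ≤ d) {P : Polynomial S9}
    (h : Polynomial.C (X 0 : S9) * P ∈ Ideal.span {gen9 i j d}) :
    P ∈ Ideal.span {gen9 i j d} := by
  rw [Ideal.mem_span_singleton] at h ⊢
  obtain ⟨h1, hh⟩ := h
  have hdvd : Polynomial.C (X 0 : S9) ∣ gen9 i j d * h1 := ⟨P, hh.symm⟩
  rcases prime_CX0.2.2 _ _ hdvd with hcase | hcase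
  · exact absurd hcase (CX0_not_dvd_gen hi hj hd)
  · obtain ⟨h2, rfl⟩ := hcase
    refine ⟨h2, ?_⟩
    have hC : (Polynomial.C (X 0 : S9)) ≠ 0 := by
      simpa using MvPolynomial.X_ne_zero (R := ℂ) (0 : Fin 2)
    apply mul_left_cancel₀ hC
    rw [hh]; ring

lemma regular9_pow {i j d : ℕ} (hi : 1 ≤ i) (hj : 1 ≤ j) (hd : 1 ≤ d) (N : ℕ) :
    ∀ P : Polynomial S9, (Polynomial.C (X 0 : S9)) ^ N * P ∈ Ideal.span {gen9 i j d} →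
      P ∈ Ideal.span {gen9 i j d} := by
  induction N with
  | zero => intro P h; simpa using h
  | succ n ih =>
    intro P h
    apply regular9 hi hj hd
    apply ih
    rw [← mul_assoc, ← pow_succ]
    exact h

/-- the image of the variable `v` in the fraction field -/
def tt (i j d : ℕ) : F9 := (φ9 (ff d)) ^ j / uu ^ i

lemma monomial_mem {i j d : ℕ} {D r : ℕ} (hr : r ≤ D) :
    (Polynomial.C (X 0 : S9)) ^ (i * D) * Polynomial.X ^ r -
      Polynomial.C ((ff d) ^ (j * r) * (X 0 : S9) ^ (i * (D - r))) ∈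
      Ideal.span {gen9 i j d} := by
  rw [Ideal.mem_span_singleton]
  have h1 : gen9 i j d ∣
      (Polynomial.C ((X 0 : S9) ^ i) * Polynomial.X) ^ r - (Polynomial.C ((ff d) ^ j)) ^ r :=
    sub_dvd_pow_sub_pow _ _ r
  have harith : i * (D - r) + i * r = i * D := by
    rw [← Nat.mul_add, Nat.sub_add_cancel hr]
  have e1 : (X 0 : S9) ^ (i * D) = (X 0 : S9) ^ (i * (D - r)) * (X 0 : S9) ^ (i * r) := by
    rw [← pow_add, harith]
  have key : (Polynomial.C (X 0 : S9)) ^ (i * D) * Polynomial.X ^ r -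
      Polynomial.C ((ff d) ^ (j * r) * (X 0 : S9) ^ (i * (D - r))) =
      Polynomial.C ((X 0 : S9) ^ (i * (D - r))) *
        ((Polynomial.C ((X 0 : S9) ^ i) * Polynomial.X) ^ r - (Polynomial.C ((ff d) ^ j)) ^ r) := by
    simp only [mul_pow, ← Polynomial.C_pow, ← pow_mul, Polynomial.C_mul, e1]
    ring
  rw [key]
  exact h1.mul_left _

lemma main9 {i j d : ℕ} (hi : 1 ≤ i) (hj : 1 ≤ j) (hd : 1 ≤ d) (P : Polynomial S9)
    (hP : Polynomial.eval₂ φ9 (tt i j d) P = 0) : P ∈ Ideal.span {gen9 i j d} := by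
  set D := P.natDegree with hD
  have hterm : ∀ r, r ≤ D → (tt i j d) ^ r * uu ^ (i * D) =
      φ9 ((ff d) ^ (j * r) * (X 0 : S9) ^ (i * (D - r))) := by
    intro r hr
    have harith : i * (D - r) + i * r = i * D := by
      rw [← Nat.mul_add, Nat.sub_add_cancel hr]
    rw [map_mul, map_pow, map_pow]
    rw [show φ9 (X 0) = uu from rfl]
    rw [tt, div_pow, ← pow_mul, ← pow_mul, div_mul_eq_mul_div,
      div_eq_iff (pow_ne_zero _ uu_ne), mul_assoc, ← pow_add, harith]
  set E : S9 := ∑ r ∈ Finset.range (D + 1),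
    P.coeff r * ((ff d) ^ (j * r) * (X 0 : S9) ^ (i * (D - r))) with hEdef
  have hE : E = 0 := by
    apply φ9_inj
    rw [map_zero, map_sum]
    have hcg : ∀ r ∈ Finset.range (D + 1),
        φ9 (P.coeff r * ((ff d) ^ (j * r) * (X 0 : S9) ^ (i * (D - r)))) =
        φ9 (P.coeff r) * (tt i j d) ^ r * uu ^ (i * D) := by
      intro r hr
      rw [map_mul, ← hterm r (Nat.lt_succ_iff.mp (Finset.mem_range.mp hr)), mul_assoc]
    rw [Finset.sum_congr rfl hcg, ← Finset.sum_mul, ← Polynomial.eval₂_eq_sum_range, hP, zero_mul]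
  have hmem : (Polynomial.C (X 0 : S9)) ^ (i * D) * P ∈ Ideal.span {gen9 i j d} := by
    have hrepr : (Polynomial.C (X 0 : S9)) ^ (i * D) * P - Polynomial.C E =
        ∑ r ∈ Finset.range (D + 1), Polynomial.C (P.coeff r) *
          ((Polynomial.C (X 0 : S9)) ^ (i * D) * Polynomial.X ^ r -
            Polynomial.C ((ff d) ^ (j * r) * (X 0 : S9) ^ (i * (D - r)))) := by
      conv_lhs => rw [P.as_sum_range_C_mul_X_pow]
      rw [hEdef, map_sum, Finset.mul_sum, ← Finset.sum_sub_distrib]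
      refine Finset.sum_congr rfl fun r _ => ?_
      rw [map_mul]
      ring
    have hsum : (Polynomial.C (X 0 : S9)) ^ (i * D) * P - Polynomial.C E ∈
        Ideal.span {gen9 i j d} := by
      rw [hrepr]
      exact Ideal.sum_mem _ fun r hr => Ideal.mul_mem_left _ _
        (monomial_mem (Nat.lt_succ_iff.mp (Finset.mem_range.mp hr)))
    simpa [hE] using hsum
  exact regular9_pow hi hj hd (i * D) P hmem

/-- the equivalence `ℂ[x0,x1,x2] ≃ ℂ[x0,x2][x1]` (old `x1` becomes the `Polynomial` var) -/
def ee : MvPolynomial (Fin 3) ℂ ≃+* Polynomial S9 :=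
  ((renameEquiv ℂ (Equiv.swap (0 : Fin 3) 1)).trans (finSuccEquiv ℂ 2)).toRingEquiv

/-- evaluation `x0 ↦ u, x1 ↦ t, x2 ↦ s` into the fraction field -/
def ev9 (t : F9) : MvPolynomial (Fin 3) ℂ →+* F9 :=
  eval₂Hom (φ9.comp (MvPolynomial.C)) ![uu, t, ss]

lemma ee_X0 : ee (X 0) = Polynomial.C (X 0 : S9) := by
  simp [ee, Equiv.swap_apply_left]
  rw [show (1 : Fin 3) = (0 : Fin 2).succ from rfl, finSuccEquiv_X_succ]

lemma ee_X1 : ee (X 1) = Polynomial.X := by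
  simp [ee, Equiv.swap_apply_right]
  exact finSuccEquiv_X_zero

lemma ee_X2 : ee (X 2) = Polynomial.C (X 1 : S9) := by
  have h2 : Equiv.swap (0 : Fin 3) 1 2 = 2 := by decide
  simp [ee, h2]
  rw [show (2 : Fin 3) = (1 : Fin 2).succ from rfl, finSuccEquiv_X_succ]

lemma ee_C (c : ℂ) : ee (MvPolynomial.C c) = Polynomial.C (MvPolynomial.C c) := by
  simp [ee, finSuccEquiv_apply, eval₂Hom_C]

lemma comp_ee (t : F9) :
    (Polynomial.eval₂RingHom φ9 t).comp (ee : MvPolynomial (Fin 3) ℂ →+* Polynomial S9) =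
      ev9 t := by
  apply MvPolynomial.ringHom_ext
  · intro c
    simp [ee_C, ev9]
  · intro n
    fin_cases n
    · simp [ee_X0, ev9, uu]
    · simp [ee_X1, ev9]
    · simp [ee_X2, ev9, ss]

lemma ee_gen (i j d : ℕ) :
    ee ((X 0 : MvPolynomial (Fin 3) ℂ) ^ i * X 1 - ((X 2) ^ d - 1) ^ j) = gen9 i j d := by
  rw [map_sub, map_mul, map_pow, map_pow, map_sub, map_pow, map_one, ee_X0, ee_X1, ee_X2,
    gen9, ff, Polynomial.C_pow, Polynomial.C_pow, Polynomial.C_sub, Polynomial.C_pow,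
    Polynomial.C_1]

lemma ker3 {i j d : ℕ} (hi : 1 ≤ i) (hj : 1 ≤ j) (hd : 1 ≤ d)
    (p : MvPolynomial (Fin 3) ℂ) (hp : ev9 (tt i j d) p = 0) :
    p ∈ Ideal.span {(X 0 : MvPolynomial (Fin 3) ℂ) ^ i * X 1 - ((X 2) ^ d - 1) ^ j} := by
  have h1 : Polynomial.eval₂ φ9 (tt i j d) (ee p) = 0 := by
    have := RingHom.congr_fun (comp_ee (tt i j d)) p
    simpa using this.trans hp
  have h2 : ee p ∈ Ideal.span {gen9 i j d} := main9 hi hj hd _ h1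
  have h3 := Ideal.mem_map_of_mem (ee.symm : Polynomial S9 →+* MvPolynomial (Fin 3) ℂ) h2
  rw [Ideal.map_span, Set.image_singleton] at h3
  have h4 : (ee.symm : Polynomial S9 →+* MvPolynomial (Fin 3) ℂ) (gen9 i j d) =
      (X 0 : MvPolynomial (Fin 3) ℂ) ^ i * X 1 - ((X 2) ^ d - 1) ^ j := by
    rw [← ee_gen i j d]; exact ee.symm_apply_apply _
  rw [h4] at h3
  simpa using h3


end Stmt9Aux

set_option maxHeartbeats 1000000 in
set_option synthInstance.maxHeartbeats 200000 in
/-- The ring homomorphism `ℂ[u,v,s]/(uᵏv − (s^d−1)^{m'}) → ℂ[u,w,s]/(uᵐw − (s^d−1))`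
given by `u ↦ u`, `s ↦ s`, `v ↦ w^{m'}` (with `k = m·m'`) is well-defined and
injective. -/
theorem stmt_9 (m m' d : ℕ) (hm : 1 ≤ m) (hm' : 1 ≤ m') (hd : 1 ≤ d) :
    ∃ ψ : (MvPolynomial (Fin 3) ℂ ⧸
        Ideal.span {(X 0) ^ (m * m') * X 1 - ((X 2) ^ d - 1) ^ m'}) →+*
      (MvPolynomial (Fin 3) ℂ ⧸
        Ideal.span {(X 0) ^ m * X 1 - ((X 2) ^ d - 1)}),
      ψ (Ideal.Quotient.mk _ (X 0)) = Ideal.Quotient.mk _ (X 0) ∧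
      ψ (Ideal.Quotient.mk _ (X 2)) = Ideal.Quotient.mk _ (X 2) ∧
      ψ (Ideal.Quotient.mk _ (X 1)) = (Ideal.Quotient.mk _ (X 1)) ^ m' ∧
      Function.Injective ψ := by
  classical
  set gA : MvPolynomial (Fin 3) ℂ := (X 0) ^ (m * m') * X 1 - ((X 2) ^ d - 1) ^ m' with hgA
  set gB : MvPolynomial (Fin 3) ℂ := (X 0) ^ m * X 1 - ((X 2) ^ d - 1) with hgB
  set IA := Ideal.span {gA}
  set IB := Ideal.span {gB}
  have hk : 1 ≤ m * m' := Nat.one_le_iff_ne_zero.mpr (by positivity)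
  -- substitution x1 ↦ x1^m'
  set sb : MvPolynomial (Fin 3) ℂ →+* MvPolynomial (Fin 3) ℂ := eval₂Hom (MvPolynomial.C) ![X 0, (X 1 : MvPolynomial (Fin 3) ℂ) ^ m', X 2] with hsb
  set ψ0 : MvPolynomial (Fin 3) ℂ →+* (MvPolynomial (Fin 3) ℂ ⧸ IB) := (Ideal.Quotient.mk IB).comp sb with hψ0
  have hsbgA : sb gA = (X 0 : MvPolynomial (Fin 3) ℂ) ^ (m * m') * ((X 1 : MvPolynomial (Fin 3) ℂ) ^ m') - ((X 2) ^ d - 1) ^ m' := by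
    simp [hsb, hgA, eval₂Hom_X']
  have hwd : ∀ a ∈ IA, ψ0 a = 0 := by
    intro a ha
    have : IA ≤ RingHom.ker ψ0 := by
      rw [Ideal.span_le, Set.singleton_subset_iff]
      have : ψ0 gA = 0 := by
        rw [hψ0, RingHom.comp_apply, hsbgA, Ideal.Quotient.eq_zero_iff_mem]
        rw [Ideal.mem_span_singleton]
        have : (X 0 : MvPolynomial (Fin 3) ℂ) ^ (m * m') * ((X 1 : MvPolynomial (Fin 3) ℂ) ^ m') - ((X 2) ^ d - 1) ^ m' =
            ((X 0 : MvPolynomial (Fin 3) ℂ) ^ m * X 1) ^ m' - ((X 2) ^ d - 1) ^ m' := by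
          rw [mul_pow, ← pow_mul]
        rw [this]
        exact sub_dvd_pow_sub_pow _ _ m'
      exact this
    exact this ha
  set ψ := Ideal.Quotient.lift IA ψ0 hwd with hψ
  refine ⟨ψ, ?_, ?_, ?_, ?_⟩
  · rw [hψ, Ideal.Quotient.lift_mk, hψ0]; simp [hsb, eval₂Hom_X']
  · rw [hψ, Ideal.Quotient.lift_mk, hψ0]; simp [hsb, eval₂Hom_X']
  · rw [hψ, Ideal.Quotient.lift_mk, hψ0]; simp [hsb, eval₂Hom_X']
  · -- injectivity
    set αA := ev9 (tt (m * m') m' d) with hαA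
    set αB := ev9 (tt m 1 d) with hαB
    have hφff : φ9 (ff d) = ss ^ d - 1 := by
      rw [ff, RingHom.map_sub, RingHom.map_pow, RingHom.map_one]; rfl
    have hBwd : ∀ a ∈ IB, αB a = 0 := by
      intro a ha
      have : IB ≤ RingHom.ker αB := by
        rw [Ideal.span_le, Set.singleton_subset_iff]
        have : αB gB = 0 := by
          rw [hαB, hgB]
          simp only [ev9, map_sub, map_mul, map_pow, map_one, eval₂Hom_X']
          simp only [Matrix.cons_val_zero, Matrix.cons_val_one, Matrix.head_cons,
            Matrix.cons_val_two, Matrix.tail_cons]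
          rw [tt, pow_one, hφff, ← mul_div_assoc, mul_div_cancel_left₀ _ (pow_ne_zero _ uu_ne), sub_self]
        exact this
      exact this ha
    set βB := Ideal.Quotient.lift IB αB hBwd with hβB
    have hcomp : βB.comp ψ0 = αA := by
      apply MvPolynomial.ringHom_ext
      · intro c
        rw [RingHom.comp_apply, hψ0, RingHom.comp_apply]
        simp only [hsb, eval₂Hom_C]
        rw [hβB, Ideal.Quotient.lift_mk]
        simp [hαA, hαB, ev9]
      · intro n
        rw [RingHom.comp_apply, hψ0, RingHom.comp_apply]
        fin_cases n
        · simp only [hsb, eval₂Hom_X', Matrix.cons_val_zero]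
          rw [hβB, Ideal.Quotient.lift_mk]
          simp [hαA, hαB, ev9]
        · simp only [hsb, eval₂Hom_X', show (⟨1, by norm_num⟩ : Fin 3) = 1 from rfl,
            Matrix.cons_val_one, Matrix.head_cons, Matrix.cons_val_zero]
          rw [hβB, Ideal.Quotient.lift_mk, RingHom.map_pow]
          have h1 : αB (X 1) = tt m 1 d := by
            simp [hαB, ev9]
          have h2 : αA (X 1) = tt (m * m') m' d := by
            simp [hαA, ev9]
          rw [h1, h2]
          rw [tt, tt, pow_one, div_pow, ← pow_mul]
        · simp only [hsb, eval₂Hom_X', Matrix.cons_val_two, Matrix.tail_cons, Matrix.head_cons]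
          rw [hβB, Ideal.Quotient.lift_mk]
          simp [hαA, hαB, ev9]
    intro x y hxy
    obtain ⟨p, rfl⟩ := Ideal.Quotient.mk_surjective x
    obtain ⟨q, rfl⟩ := Ideal.Quotient.mk_surjective y
    rw [hψ, Ideal.Quotient.lift_mk, Ideal.Quotient.lift_mk] at hxy
    have hαeq : αA p = αA q := by
      rw [← RingHom.congr_fun hcomp p, ← RingHom.congr_fun hcomp q]
      simp only [RingHom.comp_apply]
      rw [hxy]
    have : αA (p - q) = 0 := by rw [map_sub, hαeq, sub_self]
    have hmem := ker3 hk hm' hd (p - q) this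
    exact Ideal.Quotient.eq.mpr hmem
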